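/- Let A ∈ ℝ^{m×n} preserve Chebyshev systems, let F ⊆ {1,…,n} be the set of loop vertices of G^{sd}_A with |F| = k, and let t₁, t₂ ∈ {-1,1}ⁿ be fixed points of the sign transition map 𝒱. If (t₁)ⱼ = (t₂)ⱼ for all j ∈ F, then t₁ = t₂. Consequently 𝒱 has at most 2ᵏ fixed points. -/
import Mathlib


open Filter

/-- A vector is Chebyshev if all of its components are non-zero. -/
def Cheb {n : ℕ} (v : Fin n → ℝ) : Prop := ∀ i, v i ≠ 0

/-- `mu a v` is the (unique, when `v` is Chebyshev) minimizer of `u ↦ ‖a - u • v‖`,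
where `‖·‖` is the sup-norm on `Fin n → ℝ`. -/
noncomputable def mu {n : ℕ} (a v : Fin n → ℝ) : ℝ :=
  Classical.epsilon fun t : ℝ => ∀ u : ℝ, ‖a - t • v‖ ≤ ‖a - u • v‖

noncomputable def phi {m n : ℕ} (A : Fin m → Fin n → ℝ) (v : Fin n → ℝ) : Fin m → ℝ :=
  fun i => mu (A i) v

noncomputable def psi {m n : ℕ} (A : Fin m → Fin n → ℝ) (u : Fin m → ℝ) : Fin n → ℝ :=
  fun j => mu (fun i => A i j) u

/-- `A` preserves Chebyshev systems. -/
def PreservesCheb {m n : ℕ} (A : Fin m → Fin n → ℝ) : Prop :=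
  (∀ v : Fin n → ℝ, Cheb v → Cheb (phi A v)) ∧ (∀ u : Fin m → ℝ, Cheb u → Cheb (psi A u))

/-- A vector is alternance-free if exactly one component attains the max absolute value. -/
def AlternanceFree {n : ℕ} (a : Fin n → ℝ) : Prop := ∃! i, |a i| = ‖a‖

/-- Chebyshev norm of the residual `A - u vᵀ`. -/
noncomputable def Cerr {m n : ℕ} (A : Fin m → Fin n → ℝ) (u : Fin m → ℝ) (v : Fin n → ℝ) : ℝ :=
  ⨆ i, ⨆ j, |A i j - u i * v j|

/-- Chebyshev norm of a matrix. -/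
noncomputable def CnormM {m n : ℕ} (A : Fin m → Fin n → ℝ) : ℝ :=
  ⨆ i, ⨆ j, |A i j|

/-- The sequence `v⁽ᵏ⁾` of the alternating minimization method started at `v0`. -/
noncomputable def vseq {m n : ℕ} (A : Fin m → Fin n → ℝ) (v0 : Fin n → ℝ) : ℕ → Fin n → ℝ
  | 0 => v0
  | k + 1 => psi A (phi A (vseq A v0 k))

/-- The sign transition map of the alternating minimization method, written explicitly via
the unique maximizing indices `I` (columns) and `J` (rows). -/
noncomputable def Vmap {m n : ℕ} (A : Fin m → Fin n → ℝ) (I : Fin n → Fin m)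
    (J : Fin m → Fin n) (t : Fin n → ℝ) : Fin n → ℝ :=
  fun j => Real.sign (A (I j) j) * Real.sign (A (I j) (J (I j))) * t (J (I j))

theorem stmt15 {m n : ℕ} (hm : 2 ≤ m) (hn : 2 ≤ n) (A : Fin m → Fin n → ℝ)
    (I : Fin n → Fin m) (J : Fin m → Fin n)
    (hI : ∀ j i, i ≠ I j → |A i j| < |A (I j) j|)
    (hJ : ∀ i j, j ≠ J i → |A i j| < |A i (J i)|)
    (k : ℕ) (hk : k = Set.ncard {j : Fin n | J (I j) = j})
    (t₁ t₂ : Fin n → ℝ) (h₁ : ∀ j, t₁ j = 1 ∨ t₁ j = -1) (h₂ : ∀ j, t₂ j = 1 ∨ t₂ j = -1)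
    (hf₁ : Vmap A I J t₁ = t₁) (hf₂ : Vmap A I J t₂ = t₂)
    (hF : ∀ j, J (I j) = j → t₁ j = t₂ j) :
    t₁ = t₂ ∧
      Set.ncard {t : Fin n → ℝ | (∀ j, t j = 1 ∨ t j = -1) ∧ Vmap A I J t = t} ≤ 2 ^ k := by
  classical
  set σ : Fin n → Fin n := fun j => J (I j) with hσ
  have hmono : ∀ j, σ j ≠ j → |A (I j) j| < |A (I (σ j)) (σ j)| := by
    intro j h
    have h1 : |A (I j) j| < |A (I j) (J (I j))| := hJ (I j) j (fun he => h he.symm)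
    have h2 : |A (I j) (σ j)| ≤ |A (I (σ j)) (σ j)| := by
      by_cases he : I j = I (σ j)
      · rw [he]
      · exact (hI (σ j) (I j) he).le
    exact lt_of_lt_of_le h1 h2
  set meas : Fin n → ℕ := fun j =>
    (Finset.univ.filter fun j' => |A (I j) j| < |A (I j') j'|).card with hmeas_def
  have hmeas : ∀ j, σ j ≠ j → meas (σ j) < meas j := by
    intro j h
    apply Finset.card_lt_card
    constructor
    · intro x hx
      simp only [Finset.mem_filter, Finset.mem_univ, true_and] at hx ⊢
      exact lt_trans (hmono j h) hx
    · intro hsub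
      have : σ j ∈ Finset.univ.filter fun j' => |A (I j) j| < |A (I j') j'| := by
        simp only [Finset.mem_filter, Finset.mem_univ, true_and]
        exact hmono j h
      have := hsub this
      simp only [Finset.mem_filter, Finset.mem_univ, true_and] at this
      exact lt_irrefl _ this
  have key : ∀ (s₁ s₂ : Fin n → ℝ), Vmap A I J s₁ = s₁ → Vmap A I J s₂ = s₂ →
      (∀ j, J (I j) = j → s₁ j = s₂ j) → s₁ = s₂ := by
    intro s₁ s₂ hg₁ hg₂ hG
    have main : ∀ N j, meas j ≤ N → s₁ j = s₂ j := by
      intro N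
      induction N with
      | zero =>
        intro j hj
        by_cases h : σ j = j
        · exact hG j h
        · exact absurd (lt_of_lt_of_le (hmeas j h) hj) (Nat.not_lt_zero _)
      | succ N ih =>
        intro j hj
        by_cases h : σ j = j
        · exact hG j h
        · have hstep : meas (σ j) ≤ N := Nat.lt_succ_iff.mp (lt_of_lt_of_le (hmeas j h) hj)
          have e1 := congrFun hg₁ j
          have e2 := congrFun hg₂ j
          simp only [Vmap] at e1 e2
          rw [← e1, ← e2, ih (σ j) hstep]
    exact funext fun j => main (meas j) j le_rfl
  refine ⟨key t₁ t₂ hf₁ hf₂ hF, ?_⟩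
  set F' : Set (Fin n) := {j : Fin n | J (I j) = j} with hF'
  have hcard : Set.ncard (Set.univ : Set (↥F' → Bool)) = 2 ^ k := by
    rw [Set.ncard_univ, Nat.card_fun, Nat.card_eq_fintype_card, Fintype.card_bool,
      Nat.card_coe_set_eq, hk]
  rw [← hcard]
  apply Set.ncard_le_ncard_of_injOn (fun t => fun j : ↥F' => decide (t j.1 = 1))
  · intro t _; trivial
  · intro a ha b hb hab
    refine key a b ha.2 hb.2 ?_
    intro j hj
    have := congrFun hab ⟨j, hj⟩
    simp only [decide_eq_decide] at this
    rcases ha.1 j with h | h <;> rcases hb.1 j with h' | h' <;>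
      simp_all
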